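/- Let P(X) = X^d + a_{d−1}X^{d−1} + ⋯ + a₀ ∈ ℤ[X] be monic irreducible with a₀ ≠ 0, having all roots of modulus different from 1 and at least one root of modulus greater than 1. Let α₁, …, α_p be the roots with |α_i| > 1 (p ≥ 1). Then 0 is an isolated point of the set L(P) = { limsup_{n→∞} ‖∑_{i=1}^{p} ξ_i α_i^n‖ : (ξ₁,…,ξ_p) chosen so that ∑ ξ_i α_i^n ∈ ℝ for all n }, where ‖x‖ denotes the distance from x to the nearest integer. More precisely, every element of L(P) smaller than 1/(2∑_{j=0}^{d}|a_j|) equals 0. -/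

import Mathlib

open Polynomial Finset Filter

/-- Distance from a real number to the nearest integer. -/
noncomputable def distNearestInt (x : ℝ) : ℝ := |x - (round x : ℤ)|

/-- The multiplicative Markoff–Lagrange spectrum attached to the expanding roots
`α₁,…,α_p`: the set of `limsup_n ‖∑ ξᵢ αᵢⁿ‖` over tuples `ξ` for which
`∑ ξᵢ αᵢⁿ` is real for all `n ≥ 0`. -/
noncomputable def LagSet (p : ℕ) (α : Fin p → ℂ) : Set ℝ :=
  {ℓ | ∃ ξ : Fin p → ℂ, (∀ n : ℕ, (∑ i, ξ i * α i ^ n).im = 0) ∧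
    ℓ = Filter.limsup (fun n : ℕ => distNearestInt (∑ i, ξ i * α i ^ n).re) atTop}

/-- The shift operator on complex sequences. -/
noncomputable def shiftL : (ℕ → ℂ) →ₗ[ℂ] (ℕ → ℂ) where
  toFun u := fun n => u (n + 1)
  map_add' u v := rfl
  map_smul' c u := rfl

lemma shiftL_pow (k : ℕ) (u : ℕ → ℂ) (n : ℕ) : (shiftL ^ k) u n = u (n + k) := by
  induction k generalizing u n with
  | zero => rfl
  | succ k ih =>
      rw [pow_succ, Module.End.mul_apply]
      show (shiftL ^ k) (shiftL u) n = u (n + (k + 1))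
      rw [ih]
      rfl

lemma aeval_shift_sub_C (β : ℂ) (u : ℕ → ℂ) :
    (aeval shiftL (X - C β) : Module.End ℂ (ℕ → ℂ)) u = fun n => u (n + 1) - β * u n := by
  funext n
  simp [map_sub, Polynomial.aeval_X, Polynomial.aeval_C, Module.algebraMap_end_apply,
    LinearMap.sub_apply, shiftL]

/-- Apply the product of shift-minus-root operators along a list of roots. -/
def prodSh : List ℂ → (ℕ → ℂ) → (ℕ → ℂ)
  | [], u => u
  | β :: L, u => prodSh L (fun n => u (n + 1) - β * u n)

lemma prodSh_eq (L : List ℂ) (u : ℕ → ℂ) :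
    prodSh L u = (aeval shiftL ((L.map fun β => X - C β).prod) : Module.End ℂ (ℕ → ℂ)) u := by
  induction L generalizing u with
  | nil => simp [prodSh]
  | cons β L ih =>
      rw [List.map_cons, List.prod_cons, mul_comm, map_mul, Module.End.mul_apply,
        aeval_shift_sub_C]
      exact ih _

/-- One-step factor: bounded solution of `(T-β)u → 0` with `|β| ≠ 1` tends to 0. -/
lemma tendsto_of_factor (β : ℂ) (hβ : ‖β‖ ≠ 1) (u : ℕ → ℂ) (B : ℝ)
    (hB : ∀ n, ‖u n‖ ≤ B)
    (hv : Tendsto (fun n => u (n + 1) - β * u n) atTop (nhds 0)) :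
    Tendsto u atTop (nhds 0) := by
  have hB0 : 0 ≤ B := le_trans (norm_nonneg _) (hB 0)
  set c := ‖β‖ with hc
  have hβc : ‖β‖ = c := by rw [hc]
  have hc0 : 0 ≤ c := norm_nonneg _
  rw [NormedAddCommGroup.tendsto_nhds_zero]
  intro ε hε
  rcases lt_or_gt_of_ne (hβc ▸ hβ) with hlt | hgt
  · -- |β| < 1
    have hpos : 0 < ε * (1 - c) / 2 := by nlinarith
    obtain ⟨N, hN⟩ := eventually_atTop.1
      (NormedAddCommGroup.tendsto_nhds_zero.1 hv (ε * (1 - c) / 2) hpos)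
    have claim : ∀ k, ‖u (N + k)‖ ≤ c ^ k * B + ε / 2 := by
      intro k
      induction k with
      | zero => simpa using le_trans (hB N) (by linarith)
      | succ k ih =>
          have h1 : ‖u (N + k + 1) - β * u (N + k)‖ < ε * (1 - c) / 2 :=
            hN (N + k) (Nat.le_add_right _ _)
          have h2 : ‖u (N + k + 1)‖ ≤ c * ‖u (N + k)‖ + ε * (1 - c) / 2 := by
            calc ‖u (N + k + 1)‖ = ‖β * u (N + k) + (u (N + k + 1) - β * u (N + k))‖ := by
                  ring_nf
              _ ≤ ‖β * u (N + k)‖ + ‖u (N + k + 1) - β * u (N + k)‖ := norm_add_le _ _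
              _ ≤ c * ‖u (N + k)‖ + ε * (1 - c) / 2 := by
                  rw [norm_mul]; exact add_le_add le_rfl h1.le
          have : N + (k + 1) = N + k + 1 := by omega
          rw [this]
          have hck : 0 ≤ c ^ k := pow_nonneg hc0 k
          calc ‖u (N + k + 1)‖ ≤ c * ‖u (N + k)‖ + ε * (1 - c) / 2 := h2
            _ ≤ c * (c ^ k * B + ε / 2) + ε * (1 - c) / 2 :=
                add_le_add (mul_le_mul_of_nonneg_left ih hc0) le_rfl
            _ = c ^ (k + 1) * B + ε / 2 := by rw [pow_succ]; ring
    have htend : Tendsto (fun k => c ^ k * B) atTop (nhds 0) := by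
      simpa using (tendsto_pow_atTop_nhds_zero_of_lt_one hc0 hlt).mul_const B
    obtain ⟨K, hK⟩ := eventually_atTop.1
      (NormedAddCommGroup.tendsto_nhds_zero.1 htend (ε / 2) (by linarith))
    refine eventually_atTop.2 ⟨N + K, fun n hn => ?_⟩
    have hnN : n = N + (n - N) := by omega
    have hk : K ≤ n - N := by omega
    have h1 := claim (n - N)
    have h2 : ‖c ^ (n - N) * B‖ < ε / 2 := hK _ hk
    rw [Real.norm_eq_abs, abs_of_nonneg (by positivity)] at h2
    rw [hnN]
    linarith
  · -- |β| > 1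
    have hc1 : 0 < c := by linarith
    set d := c⁻¹ with hd
    have hd0 : 0 < d := by positivity
    have hd1 : d < 1 := by rw [hd]; exact inv_lt_one_of_one_lt₀ hgt
    have hβ0 : β ≠ 0 := by
      intro h
      rw [hc, h, norm_zero] at hc1
      exact lt_irrefl _ hc1
    have hpos : 0 < ε * (1 - d) / 2 := by nlinarith
    obtain ⟨N, hN⟩ := eventually_atTop.1
      (NormedAddCommGroup.tendsto_nhds_zero.1 hv (ε * (1 - d) / 2) hpos)
    have hstep : ∀ n, ‖u n‖ ≤ d * ‖u (n + 1)‖ + d * ‖u (n + 1) - β * u n‖ := by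
      intro n
      have hdc : d * ‖β‖ = 1 := by
        rw [hd]
        exact inv_mul_cancel₀ (by linarith)
      have e1 : ‖u n‖ = d * ‖β * u n‖ := by
        rw [norm_mul, ← mul_assoc, hdc, one_mul]
      have h : β * u n = u (n + 1) - (u (n + 1) - β * u n) := by ring
      rw [h] at e1
      have e2 : ‖u (n + 1) - (u (n + 1) - β * u n)‖ ≤ ‖u (n + 1)‖ + ‖u (n + 1) - β * u n‖ :=
        norm_sub_le _ _
      have e3 : d * ‖u (n + 1) - (u (n + 1) - β * u n)‖
          ≤ d * (‖u (n + 1)‖ + ‖u (n + 1) - β * u n‖) :=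
        mul_le_mul_of_nonneg_left e2 hd0.le
      linarith [e1, e3]
    have claim : ∀ k, ∀ n, N ≤ n → ‖u n‖ ≤ d ^ k * B + ε / 2 := by
      intro k
      induction k with
      | zero => intro n _; simpa using le_trans (hB n) (by linarith)
      | succ k ih =>
          intro n hn
          have h1 : ‖u (n + 1) - β * u n‖ < ε * (1 - d) / 2 := hN n hn
          have h2 := hstep n
          have h3 := ih (n + 1) (by omega)
          have hdk : 0 ≤ d ^ k := pow_nonneg hd0.le k
          have h4 : d * ‖u (n + 1)‖ ≤ d * (d ^ k * B + ε / 2) :=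
            mul_le_mul_of_nonneg_left h3 hd0.le
          have h5 : d * ‖u (n + 1) - β * u n‖ ≤ ε * (1 - d) / 2 := by nlinarith
          have h6 : d * (d ^ k * B + ε / 2) + ε * (1 - d) / 2 = d ^ (k + 1) * B + ε / 2 := by
            rw [pow_succ]; ring
          linarith
    have htend : Tendsto (fun k => d ^ k * B) atTop (nhds 0) := by
      simpa using (tendsto_pow_atTop_nhds_zero_of_lt_one hd0.le hd1).mul_const B
    obtain ⟨K, hK⟩ := eventually_atTop.1
      (NormedAddCommGroup.tendsto_nhds_zero.1 htend (ε / 2) (by linarith))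
    refine eventually_atTop.2 ⟨N, fun n hn => ?_⟩
    have h2 : ‖d ^ K * B‖ < ε / 2 := hK K le_rfl
    rw [Real.norm_eq_abs, abs_of_nonneg (by positivity)] at h2
    have := claim K n hn
    linarith

/-- Bounded sequence annihilated (in the limit) by a product of hyperbolic
shift factors tends to 0. -/
lemma tendsto_of_prodSh : ∀ (L : List ℂ), (∀ β ∈ L, ‖β‖ ≠ 1) →
    ∀ (u : ℕ → ℂ) (B : ℝ), (∀ n, ‖u n‖ ≤ B) →
    Tendsto (prodSh L u) atTop (nhds 0) → Tendsto u atTop (nhds 0) := by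
  intro L
  induction L with
  | nil => intro _ u B hB h; exact h
  | cons β L ih =>
      intro hmod u B hB h
      have hβ : ‖β‖ ≠ 1 := hmod β List.mem_cons_self
      have hw : ∀ n, ‖u (n + 1) - β * u n‖ ≤ B + ‖β‖ * B := by
        intro n
        calc ‖u (n + 1) - β * u n‖ ≤ ‖u (n + 1)‖ + ‖β * u n‖ := norm_sub_le _ _
          _ ≤ B + ‖β‖ * B := by
              rw [norm_mul]
              exact add_le_add (hB _)
                (mul_le_mul_of_nonneg_left (hB n) (norm_nonneg β))
      have hv : Tendsto (fun n => u (n + 1) - β * u n) atTop (nhds 0) :=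
        ih (fun γ hγ => hmod γ (List.mem_cons_of_mem _ hγ)) _ _ hw h
      exact tendsto_of_factor β hβ u B hB hv

theorem stmt12 (P : Polynomial ℤ) (hmonic : P.Monic) (hirr : Irreducible P)
    (h0 : P.coeff 0 ≠ 0)
    (hhyp : ∀ z : ℂ, Polynomial.aeval z P = 0 → ‖z‖ ≠ 1)
    (p : ℕ) (hp : 1 ≤ p) (α : Fin p → ℂ)
    (hinj : Function.Injective α)
    (hroot : ∀ i, Polynomial.aeval (α i) P = 0)
    (hbig : ∀ i, 1 < ‖α i‖)
    (hall : ∀ z : ℂ, Polynomial.aeval z P = 0 → 1 < ‖z‖ → ∃ i, α i = z) :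
    (0 : ℝ) ∈ LagSet p α ∧
    ∀ ℓ ∈ LagSet p α,
      ℓ < 1 / (2 * ∑ j ∈ Finset.range (P.natDegree + 1), (|P.coeff j| : ℝ)) →
      ℓ = 0 := by
  refine ⟨⟨0, by simp, by simp [distNearestInt]⟩, ?_⟩
  rintro ℓ ⟨ξ, him, hℓeq⟩ hlt
  set d := P.natDegree with hdd
  set S : ℝ := ∑ j ∈ Finset.range (d + 1), (|P.coeff j| : ℝ) with hSdef
  set x : ℕ → ℂ := fun n => ∑ i, ξ i * α i ^ n with hxdef
  set D : ℕ → ℝ := fun n => distNearestInt (x n).re with hDdef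
  -- S ≥ 1
  have hS1 : (1 : ℝ) ≤ S := by
    have hd1 : (|P.coeff d| : ℝ) = 1 := by
      rw [hdd, ← Polynomial.leadingCoeff, hmonic.leadingCoeff]; norm_num
    calc (1 : ℝ) = (|P.coeff d| : ℝ) := hd1.symm
      _ ≤ S := Finset.single_le_sum (f := fun j => (|P.coeff j| : ℝ)) (fun j _ => by positivity)
          (Finset.self_mem_range_succ d)
  have hS0 : (0 : ℝ) < S := by linarith
  -- x n is real
  have hx : ∀ n, x n = ((x n).re : ℂ) := by
    intro n
    apply Complex.ext
    · simp
    · rw [Complex.ofReal_im]; exact him n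
  -- D bounds
  have hDhalf : ∀ n, D n ≤ 1 / 2 := fun n => abs_sub_round _
  have hD0 : ∀ n, 0 ≤ D n := fun n => abs_nonneg _
  -- the exact recurrence for x
  have haeval : ∀ i, ∑ j ∈ Finset.range (d + 1), (P.coeff j : ℂ) * α i ^ j = 0 := by
    intro i
    have h := hroot i
    rw [Polynomial.aeval_eq_sum_range] at h
    simpa [zsmul_eq_mul] using h
  have hrec : ∀ n, ∑ j ∈ Finset.range (d + 1), (P.coeff j : ℂ) * x (n + j) = 0 := by
    intro n
    have : ∑ j ∈ Finset.range (d + 1), (P.coeff j : ℂ) * x (n + j)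
        = ∑ i, ξ i * α i ^ n * ∑ j ∈ Finset.range (d + 1), (P.coeff j : ℂ) * α i ^ j := by
      simp only [hxdef, Finset.mul_sum]
      rw [Finset.sum_comm]
      refine Finset.sum_congr rfl fun i _ => Finset.sum_congr rfl fun j _ => ?_
      rw [pow_add]
      ring
    rw [this]
    exact Finset.sum_eq_zero fun i _ => by rw [haeval i, mul_zero]
  -- nearest integers
  set m : ℕ → ℤ := fun n => round (x n).re with hmdef
  set u : ℕ → ℂ := fun n => x n - (m n : ℂ) with hudef
  have habs : ∀ n, ‖u n‖ = D n := by
    intro n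
    have : u n = (((x n).re - (m n : ℝ) : ℝ) : ℂ) := by
      show x n - (m n : ℂ) = _
      rw [Complex.ofReal_sub, ← hx n]
      norm_cast
    rw [this, Complex.norm_real, Real.norm_eq_abs]
    rfl
  have hubound : ∀ n, ‖u n‖ ≤ 1 / 2 := fun n => (habs n) ▸ hDhalf n
  -- choose the intermediate constant c
  set c : ℝ := (ℓ + 1 / (2 * S)) / 2 with hcdef
  have hc1 : ℓ < c := by rw [hcdef]; linarith
  have hc2 : c < 1 / (2 * S) := by rw [hcdef]; linarith
  have hSc : S * c < 1 / 2 := by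
    have h1 : S * c < S * (1 / (2 * S)) := by
      exact mul_lt_mul_of_pos_left hc2 hS0
    have h2 : S * (1 / (2 * S)) = 1 / 2 := by field_simp
    linarith
  -- eventually D n < c
  have hbdd : IsBoundedUnder (· ≤ ·) atTop D :=
    Filter.isBoundedUnder_of ⟨1 / 2, hDhalf⟩
  have hev : ∀ᶠ n in atTop, D n < c := by
    refine Filter.eventually_lt_of_limsup_lt ?_ hbdd
    rw [← hℓeq]
    exact hc1
  obtain ⟨N, hN⟩ := Filter.eventually_atTop.1 hev
  -- the recurrence for m
  have hre : ∀ n, ∑ j ∈ Finset.range (d + 1), (P.coeff j : ℝ) * (x (n + j)).re = 0 := by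
    intro n
    have h := congrArg Complex.re (hrec n)
    rw [Complex.re_sum] at h
    simpa [Complex.mul_re] using h
  have hK : ∀ n, N ≤ n → ∑ j ∈ Finset.range (d + 1), P.coeff j * m (n + j) = 0 := by
    intro n hn
    set K : ℤ := ∑ j ∈ Finset.range (d + 1), P.coeff j * m (n + j) with hKdef
    have hKcast : (K : ℝ) = ∑ j ∈ Finset.range (d + 1), (P.coeff j : ℝ) * ((m (n + j) : ℝ)) := by
      rw [hKdef]; push_cast; ring
    have hKeq : (K : ℝ) = -∑ j ∈ Finset.range (d + 1),
        (P.coeff j : ℝ) * ((x (n + j)).re - (m (n + j) : ℝ)) := by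
      have hsplit : ∑ j ∈ Finset.range (d + 1), (P.coeff j : ℝ) * ((m (n + j) : ℝ))
          = (∑ j ∈ Finset.range (d + 1), (P.coeff j : ℝ) * (x (n + j)).re)
            - ∑ j ∈ Finset.range (d + 1),
              (P.coeff j : ℝ) * ((x (n + j)).re - (m (n + j) : ℝ)) := by
        rw [← Finset.sum_sub_distrib]
        exact Finset.sum_congr rfl fun j _ => by ring
      rw [hKcast, hsplit, hre n]
      ring
    have hterm : ∀ j ∈ Finset.range (d + 1),
        |(P.coeff j : ℝ) * ((x (n + j)).re - (m (n + j) : ℝ))| ≤ (|P.coeff j| : ℝ) * c := by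
      intro j _
      rw [abs_mul]
      have : |(x (n + j)).re - ((m (n + j) : ℝ))| = D (n + j) := rfl
      rw [this]
      have hc' : D (n + j) ≤ c := (hN (n + j) (by omega)).le
      have : (|(P.coeff j : ℝ)|) = ((|P.coeff j| : ℤ) : ℝ) := by push_cast; ring
      calc |(P.coeff j : ℝ)| * D (n + j) ≤ |(P.coeff j : ℝ)| * c :=
            mul_le_mul_of_nonneg_left hc' (abs_nonneg _)
        _ = (|P.coeff j| : ℝ) * c := by push_cast; ring
    have hKabs : |(K : ℝ)| < 1 := by
      have h1 : |(K : ℝ)| ≤ ∑ j ∈ Finset.range (d + 1), (|P.coeff j| : ℝ) * c := by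
        rw [hKeq, abs_neg]
        exact le_trans (Finset.abs_sum_le_sum_abs _ _) (Finset.sum_le_sum hterm)
      have h2 : ∑ j ∈ Finset.range (d + 1), (|P.coeff j| : ℝ) * c = S * c := by
        rw [hSdef, Finset.sum_mul]
      linarith
    have : |K| < 1 := by exact_mod_cast (by rwa [← Int.cast_abs] at hKabs : ((|K| : ℤ) : ℝ) < 1)
    exact Int.abs_lt_one_iff.1 this
  -- the recurrence for u
  have hurec : ∀ n, N ≤ n → ∑ j ∈ Finset.range (d + 1), (P.coeff j : ℂ) * u (n + j) = 0 := by
    intro n hn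
    have h1 : ∑ j ∈ Finset.range (d + 1), (P.coeff j : ℂ) * u (n + j)
        = (∑ j ∈ Finset.range (d + 1), (P.coeff j : ℂ) * x (n + j))
          - ((∑ j ∈ Finset.range (d + 1), P.coeff j * m (n + j) : ℤ) : ℂ) := by
      push_cast
      rw [← Finset.sum_sub_distrib]
      refine Finset.sum_congr rfl fun j _ => by rw [hudef]; ring
    rw [h1, hrec n, hK n hn]
    simp
  -- the polynomial over ℂ
  set Pc : Polynomial ℂ := P.map (algebraMap ℤ ℂ) with hPcdef
  have hPcmonic : Pc.Monic := hmonic.map _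
  have hPcdeg : Pc.natDegree = d := hmonic.natDegree_map _
  have hPccoeff : ∀ j, Pc.coeff j = (P.coeff j : ℂ) := by
    intro j; rw [hPcdef, Polynomial.coeff_map]; rfl
  -- evaluation of aeval shiftL Pc
  have heval : ∀ n, ((aeval shiftL Pc : Module.End ℂ (ℕ → ℂ)) u) n
      = ∑ j ∈ Finset.range (d + 1), (P.coeff j : ℂ) * u (n + j) := by
    intro n
    rw [Polynomial.aeval_eq_sum_range, hPcdeg]
    rw [LinearMap.coe_sum, Finset.sum_apply, Finset.sum_apply]
    refine Finset.sum_congr rfl fun j _ => ?_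
    rw [LinearMap.smul_apply, Pi.smul_apply, shiftL_pow, hPccoeff, smul_eq_mul]
  have hPev : ∀ᶠ n in atTop, ((aeval shiftL Pc : Module.End ℂ (ℕ → ℂ)) u) n = 0 :=
    Filter.eventually_atTop.2 ⟨N, fun n hn => by rw [heval n]; exact hurec n hn⟩
  have hPtend : Tendsto ((aeval shiftL Pc : Module.End ℂ (ℕ → ℂ)) u) atTop (nhds 0) :=
    Tendsto.congr' (Filter.EventuallyEq.symm hPev) tendsto_const_nhds
  -- factor Pc into linear factors
  set L : List ℂ := Pc.roots.toList with hLdef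
  have hPcsplit : Pc = (L.map fun β => X - C β).prod := by
    have h1 := (IsAlgClosed.splits Pc).eq_prod_roots_of_monic hPcmonic
    rw [h1]
    rw [← Multiset.coe_toList Pc.roots, Multiset.map_coe, Multiset.prod_coe]
  have hmod : ∀ β ∈ L, ‖β‖ ≠ 1 := by
    intro β hβ
    have hβr : β ∈ Pc.roots := Multiset.mem_toList.1 hβ
    have hroot' : Polynomial.aeval β P = 0 := by
      have h := (Polynomial.mem_roots hPcmonic.ne_zero).1 hβr
      rw [Polynomial.aeval_def, Polynomial.eval₂_eq_eval_map]
      exact h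
    exact hhyp β hroot'
  -- conclude
  have hprod : Tendsto (prodSh L u) atTop (nhds 0) := by
    rw [prodSh_eq, ← hPcsplit]
    exact hPtend
  have hu0 : Tendsto u atTop (nhds 0) :=
    tendsto_of_prodSh L hmod u (1 / 2) hubound hprod
  have hDtend : Tendsto D atTop (nhds 0) := by
    have := tendsto_zero_iff_norm_tendsto_zero.1 hu0
    exact this.congr fun n => habs n
  rw [hℓeq]
  exact Tendsto.limsup_eq hDtend
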